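/- Let ω be a non-quasianalytic weight function (additionally ω(2t) = O(ω(t))) with associated weight matrix M^{(α)}_k = exp((1/α)φ*_ω(αk)), α > 0. Suppose the matrix has R-moderate growth in the sense: ∀α ∃β ∃H ≥ 1 ∀t: 2 ω_{M^{(β)}}(t) ≤ ω_{M^{(α)}}(Ht) + H. Then the derived functions κ_α(t) := ∫₁^∞ ω̃_α(ts)/s² ds, where ω̃_α(t) := ω_{M^{(α)}}(t) + log(1+t²), satisfy: ∀α ∃β ∃H ≥ 1 ∀t ≥ 0: 2 κ_β(t) ≤ κ_α(Ht) + H. -/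

import Mathlib

open MeasureTheory Set Filter Asymptotics

set_option maxHeartbeats 8000000 in
theorem stmt_18 (ω : ℝ → ℝ)
    (hcont : ContinuousOn ω (Ici 0))
    (hmono : MonotoneOn ω (Ici 0))
    (hzero : ω 0 = 0) (hnonneg : ∀ t, 0 ≤ t → 0 ≤ ω t)
    (htop : Tendsto ω atTop atTop)
    (hlog : Real.log =o[atTop] ω)
    (hconv : ConvexOn ℝ univ (fun t => ω (Real.exp t)))
    (hdouble : ∃ C : ℝ, 0 < C ∧ ∀ t, 0 ≤ t → ω (2 * t) ≤ C * ω t + C)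
    (hnqa : IntegrableOn (fun t => ω t / (1 + t ^ 2)) (Ici 0))
    (φ : ℝ → ℝ)
    (hφ : ∀ s, 0 ≤ s → φ s = ⨆ y : Ici (0 : ℝ), (s * (y : ℝ) - ω (Real.exp y)))
    (M : ℝ → ℕ → ℝ)
    (hM : ∀ α, 0 < α → ∀ k, M α k = Real.exp ((1 / α) * φ (α * k)))
    (ωM : ℝ → ℝ → ℝ)
    (hωM0 : ∀ α, 0 < α → ωM α 0 = 0)
    (hωM : ∀ α, 0 < α → ∀ t, 0 < t → ωM α t = ⨆ k : ℕ, Real.log (t ^ k / M α k))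
    (hRmg : ∀ α, 0 < α → ∃ β, 0 < β ∧ ∃ H : ℝ, 1 ≤ H ∧
      ∀ t, 0 ≤ t → 2 * ωM β t ≤ ωM α (H * t) + H)
    (κ : ℝ → ℝ → ℝ)
    (hκ : ∀ α, 0 < α → ∀ t, 0 ≤ t →
      κ α t = ∫ s in Ioi (1 : ℝ), (ωM α (t * s) + Real.log (1 + (t * s) ^ 2)) / s ^ 2) :
    ∀ α, 0 < α → ∃ β, 0 < β ∧ ∃ H : ℝ, 1 ≤ H ∧
      ∀ t, 0 ≤ t → 2 * κ β t ≤ κ α (H * t) + H := by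
  intro α hα
  -- basic positivity of M
  have hMpos : ∀ γ, 0 < γ → ∀ k, 0 < M γ k := by
    intro γ hγ k; rw [hM γ hγ k]; exact Real.exp_pos _
  -- φ is an upper bound for the terms in its sup
  have hφ_ge : ∀ s, 0 ≤ s → ∀ y, 0 ≤ y → s * y - ω (Real.exp y) ≤ φ s := by
    intro s hs y hy
    have hbdd : BddAbove (range fun y : Ici (0:ℝ) => s * (y : ℝ) - ω (Real.exp y)) := by
      obtain ⟨x0, hx0⟩ := Filter.eventually_atTop.mp
        (hlog.def (show (0:ℝ) < 1/(s+1) by positivity))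
      refine ⟨max (s * max (Real.log x0) 0) 0, ?_⟩
      rintro _ ⟨⟨z, hz⟩, rfl⟩
      simp only at *
      rcases le_or_gt z (max (Real.log x0) 0) with hcase | hcase
      · have h1 : 0 ≤ ω (Real.exp z) := hnonneg _ (Real.exp_pos z).le
        have h2 : s * z ≤ s * max (Real.log x0) 0 := by
          exact mul_le_mul_of_nonneg_left hcase hs
        have := le_max_left (s * max (Real.log x0) 0) (0:ℝ)
        linarith
      · have hzx0 : x0 ≤ Real.exp z := by
          rcases le_or_gt x0 0 with h | h
          · exact h.trans (Real.exp_pos z).le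
          · have : Real.log x0 < z := lt_of_le_of_lt (le_max_left _ _) hcase
            calc x0 = Real.exp (Real.log x0) := (Real.exp_log h).symm
              _ ≤ Real.exp z := Real.exp_le_exp.mpr this.le
        have hz0 : (0:ℝ) ≤ z := le_trans (le_max_right _ _) hcase.le
        have h3 := hx0 (Real.exp z) hzx0
        rw [Real.log_exp] at h3
        rw [Real.norm_eq_abs, Real.norm_eq_abs, abs_of_nonneg hz0,
          abs_of_nonneg (hnonneg _ (Real.exp_pos z).le)] at h3
        -- z ≤ (1/(s+1)) * ω (exp z), i.e. (s+1) z ≤ ω (exp z)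
        have hs1 : (0:ℝ) < s + 1 := by linarith
        have h4 : (s+1) * z ≤ ω (Real.exp z) := by
          have h5 : (s+1) * (1/(s+1) * ω (Real.exp z)) = ω (Real.exp z) := by
            field_simp
          linarith [mul_le_mul_of_nonneg_left h3 hs1.le]
        have := le_max_right (s * max (Real.log x0) 0) (0:ℝ)
        nlinarith
    rw [hφ s hs]
    exact le_ciSup_of_le hbdd ⟨y, hy⟩ le_rfl
  have hφ0 : φ 0 ≤ 0 := by
    rw [hφ 0 le_rfl]
    refine ciSup_le fun y => ?_
    have : 0 ≤ ω (Real.exp (y:ℝ)) := hnonneg _ (Real.exp_pos _).le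
    simp only [zero_mul, zero_sub, neg_nonpos]
    linarith
  -- identity for the terms of ωM's sup
  have hterm : ∀ γ, 0 < γ → ∀ t : ℝ, 0 < t → ∀ k : ℕ,
      Real.log (t ^ k / M γ k) = k * Real.log t - (1/γ) * φ (γ * k) := by
    intro γ hγ t ht k
    rw [hM γ hγ k, Real.log_div (pow_ne_zero _ ht.ne') (Real.exp_ne_zero _),
      Real.log_pow, Real.log_exp]
  -- the sup defining ωM is bounded above
  have hbddM : ∀ γ, 0 < γ → ∀ t : ℝ, 0 < t →
      BddAbove (range fun k : ℕ => Real.log (t ^ k / M γ k)) := by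
    intro γ hγ t ht
    set y := max (Real.log t) 0 + 1 with hy_def
    have hy : 0 ≤ y := by positivity
    refine ⟨ω (Real.exp y) / γ, ?_⟩
    rintro _ ⟨k, rfl⟩
    show Real.log (t ^ k / M γ k) ≤ ω (Real.exp y) / γ
    rw [hterm γ hγ t ht k]
    have h1 : γ * k * y - ω (Real.exp y) ≤ φ (γ * k) := hφ_ge _ (by positivity) y hy
    have h2 : Real.log t ≤ y - 1 := by
      simp only [hy_def, add_sub_cancel_right]; exact le_max_left _ _
    have hk : (0:ℝ) ≤ (k:ℝ) := Nat.cast_nonneg k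
    have h3 : (k:ℝ) * Real.log t ≤ (k:ℝ) * (y - 1) := mul_le_mul_of_nonneg_left h2 hk
    rw [le_div_iff₀ hγ, sub_mul]
    have h5 : (1/γ) * φ (γ * k) * γ = φ (γ * k) := by field_simp
    have h6 := mul_le_mul_of_nonneg_right h3 hγ.le
    have h7 : (0:ℝ) ≤ (k:ℝ) * γ := mul_nonneg hk hγ.le
    linarith [h1, h5, h6, h7]
  -- ωM is at least each term
  have hωM_ge : ∀ γ, 0 < γ → ∀ t : ℝ, 0 < t → ∀ k : ℕ,
      Real.log (t ^ k / M γ k) ≤ ωM γ t := by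
    intro γ hγ t ht k
    rw [hωM γ hγ t ht]
    exact le_ciSup (hbddM γ hγ t ht) k
  -- ωM is nonnegative
  have hωM_nonneg : ∀ γ, 0 < γ → ∀ t : ℝ, 0 ≤ t → 0 ≤ ωM γ t := by
    intro γ hγ t ht
    rcases ht.eq_or_lt with rfl | htpos
    · rw [hωM0 γ hγ]
    · have := hωM_ge γ hγ t htpos 0
      rw [hterm γ hγ t htpos 0] at this
      simp only [Nat.cast_zero, zero_mul, mul_zero, zero_sub] at this
      have h1 : 0 ≤ -((1/γ) * φ 0) := by
        have : (1/γ) * φ 0 ≤ 0 := mul_nonpos_of_nonneg_of_nonpos (by positivity) hφ0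
        linarith
      linarith
  -- ωM is monotone
  have hωM_mono : ∀ γ, 0 < γ → ∀ t1 t2 : ℝ, 0 ≤ t1 → t1 ≤ t2 → ωM γ t1 ≤ ωM γ t2 := by
    intro γ hγ t1 t2 h1 h12
    rcases h1.eq_or_lt with rfl | h1pos
    · rw [hωM0 γ hγ]; exact hωM_nonneg γ hγ t2 h12
    · have h2pos : 0 < t2 := lt_of_lt_of_le h1pos h12
      rw [hωM γ hγ t1 h1pos, hωM γ hγ t2 h2pos]
      refine ciSup_mono (hbddM γ hγ t2 h2pos) fun k => ?_
      have hM' := hMpos γ hγ k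
      show Real.log (t1 ^ k / M γ k) ≤ Real.log (t2 ^ k / M γ k)
      have hpow : t1 ^ k ≤ t2 ^ k := pow_le_pow_left₀ h1pos.le h12 k
      exact Real.log_le_log (by positivity) (by gcongr)
  -- ωM is bounded above by ω (up to constants)
  have hωM_le : ∀ γ, 0 < γ → ∀ t : ℝ, 0 < t → ωM γ t ≤ (ω t + ω 1) / γ := by
    intro γ hγ t ht
    rw [hωM γ hγ t ht]
    refine ciSup_le fun k => ?_
    rw [hterm γ hγ t ht k, sub_le_iff_le_add, one_div, ← div_eq_inv_mul,
      ← add_div, le_div_iff₀ hγ]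
    have hωt : 0 ≤ ω t := hnonneg t ht.le
    have hω1 : 0 ≤ ω 1 := hnonneg 1 zero_le_one
    rcases le_or_gt 1 t with h1 | h1
    · have hlt : 0 ≤ Real.log t := Real.log_nonneg h1
      have := hφ_ge (γ * k) (by positivity) (Real.log t) hlt
      rw [Real.exp_log ht] at this
      nlinarith
    · have := hφ_ge (γ * k) (by positivity) 0 le_rfl
      rw [Real.exp_zero] at this
      have hlt : Real.log t ≤ 0 := Real.log_nonpos ht.le h1.le
      have : (k:ℝ) * Real.log t * γ ≤ 0 := by
        apply mul_nonpos_of_nonpos_of_nonneg _ hγ.le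
        exact mul_nonpos_of_nonneg_of_nonpos (Nat.cast_nonneg k) hlt
      nlinarith [hφ_ge (γ * k) (by positivity : (0:ℝ) ≤ γ * k) 0 le_rfl, Real.exp_zero]
  -- facts about log (1 + u^2)
  have hL_nonneg : ∀ u : ℝ, 0 ≤ Real.log (1 + u^2) := fun u =>
    Real.log_nonneg (by nlinarith [sq_nonneg u])
  have hL_mono : ∀ u v : ℝ, 0 ≤ u → u ≤ v → Real.log (1+u^2) ≤ Real.log (1+v^2) := by
    intro u v hu huv
    exact Real.log_le_log (by positivity) (by nlinarith)
  have hL_sub : ∀ u v : ℝ, Real.log (1+(u*v)^2) ≤ Real.log (1+u^2) + Real.log (1+v^2) := by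
    intro u v
    rw [← Real.log_mul (by positivity) (by positivity)]
    exact Real.log_le_log (by positivity)
      (by nlinarith [sq_nonneg u, sq_nonneg v, sq_nonneg (u*v)])
  set Cα := Real.log 2 + (1/2) * max (Real.log (M α 4)) 0 with hCα_def
  have hCα_nonneg : 0 ≤ Cα := by
    have h1 : (0:ℝ) ≤ Real.log 2 := Real.log_nonneg one_le_two
    have h2 := le_max_right (Real.log (M α 4)) (0:ℝ)
    rw [hCα_def]; linarith
  have hLbound : ∀ u : ℝ, 0 ≤ u → Real.log (1+u^2) ≤ (1/2) * ωM α u + Cα := by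
    intro u hu
    rcases le_or_gt u 1 with h1 | h1
    · have hω := hωM_nonneg α hα u hu
      have h2 : Real.log (1+u^2) ≤ Real.log 2 := Real.log_le_log (by positivity) (by nlinarith)
      have hmax := le_max_right (Real.log (M α 4)) (0:ℝ)
      rw [hCα_def]; linarith
    · have hu0 : 0 < u := lt_trans one_pos h1
      have h4 := hωM_ge α hα u hu0 4
      have hlog4 : Real.log (u^4 / M α 4) = 4 * Real.log u - Real.log (M α 4) := by
        rw [Real.log_div (by positivity) (hMpos α hα 4).ne', Real.log_pow]
        norm_num
      rw [hlog4] at h4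
      have hlt : Real.log (1+u^2) ≤ Real.log 2 + 2 * Real.log u := by
        have h5 : Real.log (2 * u^2) = Real.log 2 + 2 * Real.log u := by
          rw [Real.log_mul two_ne_zero (by positivity), Real.log_pow]; norm_num
        rw [← h5]
        exact Real.log_le_log (by positivity) (by nlinarith)
      have hmax := le_max_left (Real.log (M α 4)) (0:ℝ)
      rw [hCα_def]; linarith
  -- iterate R-moderate growth
  obtain ⟨β1, hβ1, H1, hH1, hR1⟩ := hRmg α hα
  obtain ⟨β, hβ, H2, hH2, hR2⟩ := hRmg β1 hβ1
  set H := max (H1 * H2) ((H1 + 2*H2)/2 + Cα) with hH_def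
  have hH1H2 : (1:ℝ) ≤ H1 * H2 := by nlinarith
  have hH : (1:ℝ) ≤ H := le_trans hH1H2 (le_max_left _ _)
  refine ⟨β, hβ, H, hH, ?_⟩
  -- pointwise key inequality
  have hkey : ∀ u : ℝ, 0 ≤ u →
      2 * (ωM β u + Real.log (1 + u^2)) ≤ ωM α (H*u) + Real.log (1 + (H*u)^2) + H := by
    intro u hu
    have hHu : u ≤ H * u := le_mul_of_one_le_left hu hH
    have e1 := hR2 u hu
    have e2 := hR1 (H2*u) (mul_nonneg (by linarith) hu)
    have e3 : ωM α (H1*(H2*u)) ≤ ωM α (H*u) := by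
      apply hωM_mono α hα _ _ (by positivity)
      have h : H1*(H2*u) = (H1*H2)*u := by ring
      rw [h]
      exact mul_le_mul_of_nonneg_right (le_max_left _ _) hu
    have e4 := hLbound u hu
    have e5 : ωM α u ≤ ωM α (H*u) := hωM_mono α hα u (H*u) hu hHu
    have e6 : Real.log (1+u^2) ≤ Real.log (1+(H*u)^2) := hL_mono u (H*u) hu hHu
    have e7 : (H1 + 2*H2)/2 + Cα ≤ H := le_max_right _ _
    linarith
  -- integrability helpers
  have hrpow_int : ∀ r : ℝ, r < -1 → IntegrableOn (fun s : ℝ => s ^ r) (Ioi (1:ℝ)) :=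
    fun r hr => integrableOn_Ioi_rpow_of_lt hr one_pos
  have hIconst : ∀ c : ℝ, IntegrableOn (fun s : ℝ => c / s^2) (Ioi (1:ℝ)) := by
    intro c
    have h := (hrpow_int (-2) (by norm_num)).const_mul c
    apply IntegrableOn.congr_fun h ?_ measurableSet_Ioi
    intro s hs
    have hs0 : (0:ℝ) < s := lt_trans one_pos hs
    show c * s ^ (-2:ℝ) = c / s^2
    rw [Real.rpow_neg hs0.le, Real.rpow_two, div_eq_mul_inv]
  have hInt : ∀ γ, 0 < γ → ∀ t : ℝ, 0 < t →
      IntegrableOn (fun s => (ωM γ (t*s) + Real.log (1 + (t*s)^2)) / s^2) (Ioi (1:ℝ)) := by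
    intro γ hγ t ht
    have hG : IntegrableOn (fun u : ℝ => ω u / u^2) (Ioi t) := by
      have hsub : Ioi t ⊆ Ioc t 1 ∪ Ioi 1 := by
        intro x hx
        rcases le_or_gt x 1 with h | h
        · exact Or.inl ⟨hx, h⟩
        · exact Or.inr h
      refine (IntegrableOn.union ?_ ?_).mono_set hsub
      · have hc : ContinuousOn (fun u : ℝ => ω u / u^2) (Icc t 1) := by
          apply ContinuousOn.div (hcont.mono ?_) (continuous_pow 2).continuousOn ?_
          · intro x hx; exact le_trans ht.le hx.1
          · intro x hx; exact pow_ne_zero _ (ne_of_gt (lt_of_lt_of_le ht hx.1))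
        exact (hc.integrableOn_Icc).mono_set Ioc_subset_Icc_self
      · have hnqa1 : IntegrableOn (fun u => 2 * (ω u / (1 + u^2))) (Ioi 1) :=
          ((hnqa.mono_set (fun x (hx : x ∈ Ioi (1:ℝ)) => Set.mem_Ici.mpr (le_trans zero_le_one (le_of_lt (Set.mem_Ioi.mp hx)))))).const_mul 2
        refine Integrable.mono' hnqa1 ?_ ?_
        · exact ((hcont.mono fun x (hx : x ∈ Ioi (1:ℝ)) => Set.mem_Ici.mpr (le_trans zero_le_one (le_of_lt (Set.mem_Ioi.mp hx)))).div
            (continuous_pow 2).continuousOn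
            (fun x (hx : x ∈ Ioi (1:ℝ)) => pow_ne_zero _ (ne_of_gt (lt_trans one_pos (Set.mem_Ioi.mp hx))))).aestronglyMeasurable
            measurableSet_Ioi
        · filter_upwards [ae_restrict_mem measurableSet_Ioi] with u hu
          have hu1 : (1:ℝ) < u := hu
          have hωu : 0 ≤ ω u := hnonneg u (by linarith)
          rw [Real.norm_eq_abs, abs_of_nonneg (by positivity), ← mul_div_assoc,
            div_le_div_iff₀ (by positivity) (by positivity)]
          have h2 : (1:ℝ)+u^2 ≤ 2*u^2 := by nlinarith
          nlinarith [mul_le_mul_of_nonneg_left h2 hωu]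
    have hGcomp : IntegrableOn (fun s : ℝ => ω (t*s) / (t*s)^2) (Ioi (1:ℝ)) := by
      have h := (integrableOn_Ioi_comp_mul_left_iff (fun u : ℝ => ω u / u^2) 1 ht).mpr
      rw [mul_one] at h
      exact h hG
    have hGcomp2 : IntegrableOn (fun s : ℝ => ω (t*s) / s^2) (Ioi (1:ℝ)) := by
      have h := hGcomp.const_mul (t^2)
      apply IntegrableOn.congr_fun h ?_ measurableSet_Ioi
      intro s hs
      have hs0 : (0:ℝ) < s := lt_trans one_pos hs
      field_simp
    have hBint : IntegrableOn (fun s : ℝ => (1/γ) * (ω (t*s) / s^2)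
        + ((ω 1 / γ + Real.log (1+t^2)) / s^2) + 8 * s ^ (-(3:ℝ)/2)) (Ioi (1:ℝ)) :=
      ((hGcomp2.const_mul (1/γ)).add (hIconst _)).add
        ((hrpow_int (-(3:ℝ)/2) (by norm_num)).const_mul 8)
    refine Integrable.mono' hBint ?_ ?_
    · have hg2 : Measurable fun s : ℝ =>
          ((⨆ k : ℕ, Real.log ((t*s)^k / M γ k)) + Real.log (1 + (t*s)^2)) / s^2 := by
        apply Measurable.div
        · apply Measurable.add
          · apply Measurable.iSup
            intro k
            exact (((measurable_const_mul t).pow_const k).div_const (M γ k)).log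
          · exact (measurable_const.add ((measurable_const_mul t).pow_const 2)).log
        · exact measurable_id.pow_const 2
      refine hg2.aestronglyMeasurable.congr ?_
      filter_upwards [ae_restrict_mem measurableSet_Ioi] with s hs
      have hts : 0 < t * s := mul_pos ht (lt_trans one_pos hs)
      rw [hωM γ hγ (t*s) hts]
    · filter_upwards [ae_restrict_mem measurableSet_Ioi] with s hs
      have hs1 : (1:ℝ) < s := hs
      have hs0 : (0:ℝ) < s := lt_trans one_pos hs1
      have hts : 0 < t * s := mul_pos ht hs0
      have hω0 := hωM_nonneg γ hγ (t*s) hts.le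
      have hLn := hL_nonneg (t*s)
      rw [Real.norm_eq_abs, abs_of_nonneg (by positivity)]
      have hnum : ωM γ (t*s) + Real.log (1 + (t*s)^2)
          ≤ (ω (t*s) + ω 1)/γ + Real.log (1+t^2) + Real.log (1+s^2) := by
        have ha := hωM_le γ hγ (t*s) hts
        have hb := hL_sub t s
        linarith
      have hstep1 : (ωM γ (t*s) + Real.log (1 + (t*s)^2)) / s^2
          ≤ ((ω (t*s) + ω 1)/γ + Real.log (1+t^2) + Real.log (1+s^2)) / s^2 :=
        (div_le_div_iff_of_pos_right (by positivity)).mpr hnum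
      have hlog_s : Real.log (1+s^2) / s^2 ≤ 8 * s ^ (-(3:ℝ)/2) := by
        have h1 := Real.log_le_rpow_div (show (0:ℝ) ≤ 1+s^2 by positivity)
          (show (0:ℝ) < 1/4 by norm_num)
        have h2 : ((1:ℝ)+s^2) ^ ((1:ℝ)/4) ≤ ((2:ℝ)*s^2) ^ ((1:ℝ)/4) :=
          Real.rpow_le_rpow (by positivity) (by nlinarith) (by norm_num)
        have h3 : ((2:ℝ)*s^2) ^ ((1:ℝ)/4) = 2 ^ ((1:ℝ)/4) * s ^ ((1:ℝ)/2) := by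
          rw [Real.mul_rpow (by norm_num) (by positivity), ← Real.rpow_natCast s 2,
            ← Real.rpow_mul hs0.le]
          norm_num
        have h4 : (2:ℝ) ^ ((1:ℝ)/4) ≤ 2 := by
          calc (2:ℝ) ^ ((1:ℝ)/4) ≤ 2 ^ (1:ℝ) :=
                Real.rpow_le_rpow_of_exponent_le one_le_two (by norm_num)
            _ = 2 := Real.rpow_one 2
        have hsr : (0:ℝ) ≤ s ^ ((1:ℝ)/2) := Real.rpow_nonneg hs0.le _
        have h5 : Real.log (1+s^2) ≤ 8 * s ^ ((1:ℝ)/2) := by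
          have h6 : ((1:ℝ)+s^2) ^ ((1:ℝ)/4) / (1/4) = 4 * (((1:ℝ)+s^2) ^ ((1:ℝ)/4)) := by
            ring
          nlinarith [h1, h2, h3, h4, hsr]
        calc Real.log (1+s^2)/s^2 ≤ (8 * s ^ ((1:ℝ)/2))/s^2 :=
              (div_le_div_iff_of_pos_right (by positivity)).mpr h5
          _ = 8 * s ^ (-(3:ℝ)/2) := by
              rw [mul_div_assoc, ← Real.rpow_natCast s 2, ← Real.rpow_sub hs0]
              norm_num
      have hsplit : ((ω (t*s) + ω 1)/γ + Real.log (1+t^2) + Real.log (1+s^2)) / s^2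
          = (1/γ) * (ω (t*s) / s^2) + ((ω 1 / γ + Real.log (1+t^2)) / s^2)
            + Real.log (1+s^2)/s^2 := by
        ring
      linarith [hstep1, hlog_s, hsplit.le, hsplit.ge]
  -- main argument
  intro t ht
  rcases ht.eq_or_lt with rfl | htpos
  · have hκ0 : ∀ γ, 0 < γ → κ γ 0 = 0 := by
      intro γ hγ
      rw [hκ γ hγ 0 le_rfl]
      have h : ∀ s : ℝ, (ωM γ (0*s) + Real.log (1 + (0*s)^2)) / s^2 = 0 := by
        intro s; rw [zero_mul, hωM0 γ hγ]; norm_num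
      simp only [h]
      simp
    rw [mul_zero, hκ0 β hβ, hκ0 α hα]
    linarith
  · have hHt : 0 < H * t := mul_pos (by linarith) htpos
    rw [hκ β hβ t htpos.le, hκ α hα (H*t) hHt.le]
    have I1 := hInt β hβ t htpos
    have I2 := hInt α hα (H*t) hHt
    have hmono_pt : ∀ s ∈ Ioi (1:ℝ),
        2 * ((ωM β (t*s) + Real.log (1 + (t*s)^2)) / s^2)
        ≤ (ωM α ((H*t)*s) + Real.log (1 + ((H*t)*s)^2)) / s^2 + H / s^2 := by
      intro s hs
      have hs1 : (1:ℝ) < s := hs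
      have hs0 : (0:ℝ) < s := lt_trans one_pos hs1
      have hts : 0 ≤ t * s := by positivity
      have hk := hkey (t*s) hts
      rw [show H * (t*s) = (H*t)*s by ring] at hk
      rw [show 2 * ((ωM β (t*s) + Real.log (1 + (t*s)^2)) / s^2)
          = (2 * (ωM β (t*s) + Real.log (1 + (t*s)^2)))/s^2 by ring, ← add_div]
      exact (div_le_div_iff_of_pos_right (by positivity)).mpr hk
    have hconst_int : ∫ s in Ioi (1:ℝ), H / s^2 = H := by
      rw [setIntegral_congr_fun (g := fun s : ℝ => H * s ^ (-2:ℝ)) measurableSet_Ioi ?_]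
      · rw [MeasureTheory.integral_const_mul, integral_Ioi_rpow_of_lt (by norm_num) one_pos]
        norm_num
      · intro s hs
        have hs0 : (0:ℝ) < s := lt_trans one_pos hs
        show H / s ^ 2 = H * s ^ (-2:ℝ)
        rw [Real.rpow_neg hs0.le, Real.rpow_two, div_eq_mul_inv]
    have I1' : IntegrableOn (fun s : ℝ =>
        2 * ((ωM β (t*s) + Real.log (1 + (t*s)^2)) / s^2)) (Ioi (1:ℝ)) := I1.const_mul 2
    have I3 : IntegrableOn (fun s : ℝ =>
        (ωM α ((H*t)*s) + Real.log (1 + ((H*t)*s)^2)) / s^2 + H / s^2) (Ioi (1:ℝ)) :=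
      I2.add (hIconst H)
    have step1 : (∫ s in Ioi (1:ℝ), 2 * ((ωM β (t*s) + Real.log (1 + (t*s)^2)) / s^2))
        ≤ ∫ s in Ioi (1:ℝ), ((ωM α ((H*t)*s) + Real.log (1 + ((H*t)*s)^2)) / s^2 + H / s^2) :=
      setIntegral_mono_on I1' I3 measurableSet_Ioi hmono_pt
    have step2 : (∫ s in Ioi (1:ℝ), ((ωM α ((H*t)*s) + Real.log (1 + ((H*t)*s)^2)) / s^2 + H / s^2))
        = (∫ s in Ioi (1:ℝ), (ωM α ((H*t)*s) + Real.log (1 + ((H*t)*s)^2)) / s^2)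
          + ∫ s in Ioi (1:ℝ), H / s^2 := MeasureTheory.integral_add I2 (hIconst H)
    have step0 : 2 * (∫ s in Ioi (1:ℝ), (ωM β (t*s) + Real.log (1 + (t*s)^2)) / s^2)
        = ∫ s in Ioi (1:ℝ), 2 * ((ωM β (t*s) + Real.log (1 + (t*s)^2)) / s^2) :=
      (MeasureTheory.integral_const_mul 2 _).symm
    rw [step0]
    rw [hconst_int] at step2
    linarith [step1, step2.le, step2.ge]
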